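/- Let X_1, …, X_n be independent mean-zero random variables on a probability space with partial sums S_k = Σ_{i=1}^k X_i and B_n² = Σ_{i=1}^n E[X_i²]. Then for all x, y > 0: P(max_{k ≤ n} S_k ≥ x) ≤ P(max_{k ≤ n} X_k > y) + exp( − x² / (2(xy + B_{n,y}²)) · (1 + (2/3)·ln(1 + xy/B_{n,y}²)) ), where B_{n,y}² = Σ_{i=1}^n E[(min(X_i, y))²]. -/

import Mathlib

open MeasureTheory

/-- Taylor remainder identity for exp. -/
lemma exp_taylor_int (s : ℝ) :
    Real.exp s - 1 - s = s ^ 2 * ∫ t in (0:ℝ)..1, (1 - t) * Real.exp (s * t) := by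
  rcases eq_or_ne s 0 with rfl | hs
  · simp
  · have key : ∫ t in (0:ℝ)..1, (1 - t) * Real.exp (s * t)
        = (Real.exp s - 1 - s) / s ^ 2 := by
      have h : ∀ t ∈ Set.uIcc (0:ℝ) 1, HasDerivAt
          (fun t : ℝ => ((1 - t) / s + 1 / s ^ 2) * Real.exp (s * t))
          ((1 - t) * Real.exp (s * t)) t := by
        intro t _
        have h1 : HasDerivAt (fun t : ℝ => (1 - t) / s + 1 / s ^ 2) (-1 / s) t := by
          simp only [one_div]
          simpa using ((hasDerivAt_id t).const_sub 1).div_const s |>.add_const (s ^ 2)⁻¹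
        have h2 : HasDerivAt (fun t : ℝ => Real.exp (s * t)) (Real.exp (s * t) * s) t := by
          exact ((Real.hasDerivAt_exp (s * t)).comp t
            ((hasDerivAt_id t).const_mul s)).congr_deriv (by simp)
        have := h1.mul h2
        exact this.congr_deriv (by field_simp; ring)
      have hcont : IntervalIntegrable (fun t : ℝ => (1 - t) * Real.exp (s * t))
          MeasureTheory.volume 0 1 := by
        apply Continuous.intervalIntegrable
        continuity
      have := intervalIntegral.integral_eq_sub_of_hasDerivAt h hcont
      rw [this]
      simp only [mul_zero, mul_one, Real.exp_zero]
      field_simp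
      ring
    rw [key]
    field_simp

/-- Bennett pointwise bound: for `s ≤ c`, `c > 0`. -/
lemma exp_le_quad {c : ℝ} (hc : 0 < c) {s : ℝ} (hs : s ≤ c) :
    Real.exp s ≤ 1 + s + (Real.exp c - 1 - c) / c ^ 2 * s ^ 2 := by
  have hmono : (∫ t in (0:ℝ)..1, (1 - t) * Real.exp (s * t))
      ≤ ∫ t in (0:ℝ)..1, (1 - t) * Real.exp (c * t) := by
    apply intervalIntegral.integral_mono_on (by norm_num)
      (by apply Continuous.intervalIntegrable; continuity)
      (by apply Continuous.intervalIntegrable; continuity)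
    intro t ht
    have ht0 : 0 ≤ t := ht.1
    have ht1 : t ≤ 1 := ht.2
    have : s * t ≤ c * t := mul_le_mul_of_nonneg_right hs ht0
    have := Real.exp_le_exp.2 this
    nlinarith [Real.exp_pos (s * t)]
  have h1 := exp_taylor_int s
  have h2 := exp_taylor_int c
  have hI : (Real.exp c - 1 - c) / c ^ 2 = ∫ t in (0:ℝ)..1, (1 - t) * Real.exp (c * t) := by
    rw [h2]; field_simp
  rw [hI]
  nlinarith [mul_le_mul_of_nonneg_left hmono (sq_nonneg s), h1]

/-- Padé [2/2] lower bound for log. -/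
lemma log_ge_pade {t : ℝ} (ht : 0 ≤ t) :
    (t + t ^ 2 / 2) / (1 + t + t ^ 2 / 6) ≤ Real.log (1 + t) := by
  set q : ℝ → ℝ := fun t => Real.log (1 + t) - (t + t ^ 2 / 2) / (1 + t + t ^ 2 / 6) with hq
  have hden : ∀ u : ℝ, 0 ≤ u → (0:ℝ) < 1 + u + u ^ 2 / 6 := by intro u hu; nlinarith
  have hderiv : ∀ u : ℝ, 0 ≤ u → HasDerivAt q
      ((1 + u)⁻¹ - (1 + u + u ^ 2 / 3) / (1 + u + u ^ 2 / 6) ^ 2) u := by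
    intro u hu
    have h1 : HasDerivAt (fun v : ℝ => Real.log (1 + v)) ((1 + u)⁻¹) u := by
      have := (Real.hasDerivAt_log (by linarith : (1:ℝ) + u ≠ 0)).comp u
        ((hasDerivAt_id u).const_add 1)
      simpa [Function.comp_def] using this
    have hnum : HasDerivAt (fun v : ℝ => v + v ^ 2 / 2) (1 + u) u := by
      have := (hasDerivAt_id u).add ((hasDerivAt_pow 2 u).div_const 2)
      simpa [Pi.add_def] using this.congr_deriv (by ring)
    have hden' : HasDerivAt (fun v : ℝ => 1 + v + v ^ 2 / 6) (1 + u / 3) u := by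
      have := (((hasDerivAt_id u).const_add 1).add ((hasDerivAt_pow 2 u).div_const 6))
      exact this.congr_deriv (by ring)
    have h2 := hnum.div hden' (ne_of_gt (hden u hu))
    have := h1.sub h2
    exact this.congr_deriv (by ring)
  have hmono : MonotoneOn q (Set.Ici (0:ℝ)) := by
    apply monotoneOn_of_deriv_nonneg (convex_Ici 0)
    · apply ContinuousOn.sub
      · exact (Real.continuousOn_log.comp (by fun_prop)
          (fun u hu => by simp at hu ⊢; intro h; linarith)).congr (fun u hu => rfl)
      · exact ContinuousOn.div (by fun_prop) (by fun_prop)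
          (fun u hu => ne_of_gt (hden u hu))
    · intro u hu
      rw [interior_Ici] at hu
      exact (hderiv u hu.le).differentiableAt.differentiableWithinAt
    · intro u hu
      rw [interior_Ici] at hu
      have hu' : 0 < u := hu
      rw [(hderiv u hu.le).deriv]
      rw [sub_nonneg, div_le_iff₀ (pow_pos (hden u hu'.le) 2)]
      rw [inv_mul_eq_div, le_div_iff₀ (by linarith)]
      nlinarith [sq_nonneg (u ^ 2), sq_nonneg u]
  have h0 : q 0 = 0 := by simp [hq]
  have := hmono (Set.mem_Ici.2 le_rfl) (Set.mem_Ici.2 ht) ht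
  rw [h0] at this
  simpa [hq, sub_nonneg] using this

open MeasureTheory ProbabilityTheory

lemma prod_maximal {Ω : Type*} [MeasurableSpace Ω] (μ : Measure Ω) [IsProbabilityMeasure μ]
    (n : ℕ) (W : ℕ → Ω → ℝ) (hmeas : ∀ i, Measurable (W i))
    (hindep : iIndepFun W μ) (C : ℝ)
    (hW0 : ∀ i ω, 0 ≤ W i ω) (hWC : ∀ i ω, W i ω ≤ C)
    (hWint : ∀ i, i < n → (∫ ω, W i ω ∂μ) ≤ 1)
    (a : ℝ) (ha : 0 < a) :
    (μ {ω | ∃ k ∈ Finset.Icc 1 n, a ≤ ∏ i ∈ Finset.range k, W i ω}).toReal ≤ a⁻¹ := by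
  classical
  set P : ℕ → Ω → ℝ := fun k ω => ∏ i ∈ Finset.range k, W i ω with hP
  have hPmeas : ∀ k, Measurable (P k) := fun k => Finset.measurable_prod _ (fun i _ => hmeas i)
  have hP0 : ∀ k ω, 0 ≤ P k ω := fun k ω => Finset.prod_nonneg (fun i _ => hW0 i ω)
  have hne : Nonempty Ω := by
    by_contra h
    rw [not_nonempty_iff] at h
    have h1 := measure_univ (μ := μ)
    rw [Set.univ_eq_empty_iff.2 h] at h1
    simp at h1
  have hC0 : 0 ≤ C := le_trans (hW0 0 Classical.ofNonempty) (hWC 0 Classical.ofNonempty)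
  have hPle : ∀ k, k ≤ n → ∀ ω, P k ω ≤ (max 1 C) ^ n := by
    intro k hk ω
    calc P k ω ≤ ∏ i ∈ Finset.range k, max 1 C := by
          apply Finset.prod_le_prod (fun i _ => hW0 i ω) (fun i _ => le_max_of_le_right (hWC i ω))
      _ = (max 1 C) ^ k := by rw [Finset.prod_const, Finset.card_range]
      _ ≤ (max 1 C) ^ n := pow_le_pow_right₀ (le_max_left 1 C) hk
  have hPint : ∀ k, k ≤ n → Integrable (P k) μ := by
    intro k hk
    apply Integrable.mono' (integrable_const ((max 1 C) ^ n)) (hPmeas k).aestronglyMeasurable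
    filter_upwards with ω
    rw [Real.norm_eq_abs, abs_of_nonneg (hP0 k ω)]
    exact hPle k hk ω
  set F : ℕ → Set Ω := fun m => {ω | ∀ j ∈ Finset.Icc 1 m, P j ω < a} with hF
  set E : ℕ → Set Ω := fun k => {ω | a ≤ P k ω} ∩ F (k - 1) with hE
  have hFmeas : ∀ m, MeasurableSet (F m) := by
    intro m
    have : F m = ⋂ j ∈ Finset.Icc 1 m, {ω | P j ω < a} := by
      ext ω; simp [hF]
    rw [this]
    exact MeasurableSet.biInter (Set.to_countable _)
      (fun j _ => measurableSet_lt (hPmeas j) measurable_const)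
  have hEmeas : ∀ k, MeasurableSet (E k) :=
    fun k => (measurableSet_le measurable_const (hPmeas k)).inter (hFmeas (k - 1))
  -- key induction
  have key : ∀ m, m ≤ n →
      (∑ k ∈ Finset.Icc 1 m, ∫ ω in E k, P k ω ∂μ) + ∫ ω in F m, P m ω ∂μ ≤ 1 := by
    intro m
    induction m with
    | zero =>
      intro _
      have hF0 : F 0 = Set.univ := by
        ext ω
        simp only [hF, Set.mem_setOf_eq, Set.mem_univ, iff_true]
        intro j hj
        exfalso
        rcases Finset.mem_Icc.1 hj with ⟨h1, h2⟩
        omega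
      have hicc : Finset.Icc 1 0 = (∅ : Finset ℕ) := by decide
      rw [hicc, hF0]
      simp [hP]
    | succ m ih =>
      intro hmn
      have hm : m ≤ n := Nat.le_of_succ_le hmn
      have hmn' : m < n := hmn
      have hEm1 : E (m + 1) = {ω | a ≤ P (m+1) ω} ∩ F m := by rw [hE]; norm_num
      have hFsplit : F m = E (m+1) ∪ F (m+1) := by
        ext ω
        simp only [hEm1, hF, Set.mem_union, Set.mem_inter_iff, Set.mem_setOf_eq]
        constructor
        · intro hω
          by_cases hcase : a ≤ P (m+1) ω
          · exact Or.inl ⟨hcase, hω⟩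
          · refine Or.inr (fun j hj => ?_)
            rcases Finset.mem_Icc.1 hj with ⟨h1, h2⟩
            rcases Nat.lt_or_ge j (m+1) with hlt | hge
            · exact hω j (Finset.mem_Icc.2 ⟨h1, Nat.lt_succ_iff.1 hlt⟩)
            · have : j = m + 1 := le_antisymm h2 hge
              rw [this]; exact lt_of_not_ge hcase
        · rintro (⟨_, hω⟩ | hω)
          · exact hω
          · intro j hj
            rcases Finset.mem_Icc.1 hj with ⟨h1, h2⟩
            exact hω j (Finset.mem_Icc.2 ⟨h1, le_trans h2 (Nat.le_succ m)⟩)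
      have hdisjEF : Disjoint (E (m+1)) (F (m+1)) := by
        rw [Set.disjoint_left]
        intro ω hωE hωF
        have h1 : a ≤ P (m+1) ω := (hEm1 ▸ hωE).1
        have h2 : P (m+1) ω < a := hωF (m+1) (Finset.mem_Icc.2 ⟨Nat.one_le_iff_ne_zero.2 (Nat.succ_ne_zero m), le_rfl⟩)
        exact absurd h1 (not_le.2 h2)
      -- set-integral splitting
      have hIsplit : ∫ ω in F m, P (m+1) ω ∂μ
          = (∫ ω in E (m+1), P (m+1) ω ∂μ) + ∫ ω in F (m+1), P (m+1) ω ∂μ := by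
        rw [hFsplit]
        exact setIntegral_union hdisjEF (hFmeas (m+1))
          ((hPint (m+1) hmn).integrableOn) ((hPint (m+1) hmn).integrableOn)
      -- independence factorization
      have hprod : ∫ ω in F m, P (m+1) ω ∂μ
          = (∫ ω in F m, P m ω ∂μ) * ∫ ω, W m ω ∂μ := by
        set ext : (↥(Finset.range m) → ℝ) → ℕ → ℝ :=
          fun v i => if h : i ∈ Finset.range m then v ⟨i, h⟩ else 0 with hext
        have hext_meas : ∀ i, Measurable (fun v => ext v i) := by
          intro i
          by_cases h : i ∈ Finset.range m
          · simp only [hext, dif_pos h]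
            exact measurable_pi_apply _
          · simp only [hext, dif_neg h]
            exact measurable_const
        set g : (↥(Finset.range m) → ℝ) → ℝ :=
          fun v => if ∀ j ∈ Finset.Icc 1 m, (∏ i ∈ Finset.range j, ext v i) < a
            then ∏ i ∈ Finset.range m, ext v i else 0 with hg
        set h : (({m} : Finset ℕ) → ℝ) → ℝ :=
          fun v => v ⟨m, Finset.mem_singleton_self m⟩ with hh
        have hgmeas : Measurable g := by
          apply Measurable.ite _ (Finset.measurable_prod _ (fun i _ => hext_meas i))
            measurable_const
          have : {v : (↥(Finset.range m) → ℝ) |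
              ∀ j ∈ Finset.Icc 1 m, (∏ i ∈ Finset.range j, ext v i) < a}
              = ⋂ j ∈ Finset.Icc 1 m, {v | (∏ i ∈ Finset.range j, ext v i) < a} := by
            ext v; simp
          rw [this]
          exact MeasurableSet.biInter (Set.to_countable _)
            (fun j _ => measurableSet_lt
              (Finset.measurable_prod _ (fun i _ => hext_meas i)) measurable_const)
        have hhmeas : Measurable h := measurable_pi_apply _
        have hdisjS : Disjoint (Finset.range m) ({m} : Finset ℕ) := by
          simp [Finset.disjoint_singleton_right]
        have hblock := (hindep.indepFun_finset (Finset.range m) {m} hdisjS hmeas).comp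
          hgmeas hhmeas
        have hgcomp : (g ∘ fun ω (i : ↥(Finset.range m)) => W (i : ℕ) ω)
            = (F m).indicator (P m) := by
          funext ω
          have hprodeq : ∀ j, j ≤ m →
              (∏ i ∈ Finset.range j, ext (fun i : ↥(Finset.range m) => W (i:ℕ) ω) i)
              = P j ω := by
            intro j hj
            apply Finset.prod_congr rfl
            intro i hi
            have him : i ∈ Finset.range m :=
              Finset.mem_range.2 (lt_of_lt_of_le (Finset.mem_range.1 hi) hj)
            simp only [hext]
            rw [dif_pos him]
          simp only [Function.comp_apply, hg, Set.indicator_apply]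
          by_cases hω : ω ∈ F m
          · rw [if_pos, if_pos hω, hprodeq m le_rfl]
            intro j hj
            rw [hprodeq j (Finset.mem_Icc.1 hj).2]
            exact hω j hj
          · rw [if_neg, if_neg hω]
            intro hcon
            exact hω (fun j hj => by rw [← hprodeq j (Finset.mem_Icc.1 hj).2]; exact hcon j hj)
        have hhcomp : (h ∘ fun ω (i : ({m} : Finset ℕ)) => W (i : ℕ) ω) = W m := rfl
        rw [hgcomp, hhcomp] at hblock
        have hWmint : Integrable (W m) μ := by
          apply Integrable.mono' (integrable_const C) (hmeas m).aestronglyMeasurable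
          filter_upwards with ω
          rw [Real.norm_eq_abs, abs_of_nonneg (hW0 m ω)]
          exact hWC m ω
        have hIndInt : Integrable ((F m).indicator (P m)) μ :=
          (hPint m hm).indicator (hFmeas m)
        have hmul := IndepFun.integral_fun_mul_eq_mul_integral hblock
          hIndInt.aestronglyMeasurable hWmint.aestronglyMeasurable
        have hlhs : (fun ω => (F m).indicator (P m) ω * W m ω)
            = (F m).indicator (P (m+1)) := by
          funext ω
          simp only [Set.indicator_apply]
          by_cases hω : ω ∈ F m
          · simp only [if_pos hω, hP, Finset.prod_range_succ]
          · simp only [if_neg hω, zero_mul]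
        rw [← integral_indicator (hFmeas m), ← integral_indicator (hFmeas m), ← hlhs]
        exact hmul
      have hWm_nonneg : 0 ≤ ∫ ω in F m, P m ω ∂μ :=
        setIntegral_nonneg (hFmeas m) (fun ω _ => hP0 m ω)
      have hstep : ∫ ω in F m, P (m+1) ω ∂μ ≤ ∫ ω in F m, P m ω ∂μ := by
        rw [hprod]
        exact mul_le_of_le_one_right hWm_nonneg (hWint m hmn')
      have hsum : ∑ k ∈ Finset.Icc 1 (m+1), ∫ ω in E k, P k ω ∂μ
          = (∑ k ∈ Finset.Icc 1 m, ∫ ω in E k, P k ω ∂μ) + ∫ ω in E (m+1), P (m+1) ω ∂μ := by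
        rw [← Finset.sum_Icc_succ_top (by omega : 1 ≤ m + 1)]
      rw [hsum]
      have := ih hm
      linarith [hIsplit, hstep]
  -- Chebyshev on each E k
  have cheb : ∀ k ∈ Finset.Icc 1 n, a * (μ (E k)).toReal ≤ ∫ ω in E k, P k ω ∂μ := by
    intro k hk
    have hkn : k ≤ n := (Finset.mem_Icc.1 hk).2
    have h1 : ∫ ω in E k, a ∂μ ≤ ∫ ω in E k, P k ω ∂μ := by
      apply setIntegral_mono_on (integrableOn_const)
        ((hPint k hkn).integrableOn) (hEmeas k)
      intro ω hω
      exact hω.1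
    rw [setIntegral_const, smul_eq_mul, mul_comm] at h1
    exact h1
  have hsumle : ∑ k ∈ Finset.Icc 1 n, (μ (E k)).toReal ≤ a⁻¹ := by
    rw [← mul_le_mul_iff_of_pos_left ha, mul_comm a a⁻¹, inv_mul_cancel₀ (ne_of_gt ha)]
    calc a * ∑ k ∈ Finset.Icc 1 n, (μ (E k)).toReal
        = ∑ k ∈ Finset.Icc 1 n, a * (μ (E k)).toReal := Finset.mul_sum _ _ _
      _ ≤ ∑ k ∈ Finset.Icc 1 n, ∫ ω in E k, P k ω ∂μ := Finset.sum_le_sum cheb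
      _ ≤ 1 := by
          have h1 := key n le_rfl
          have h2 : 0 ≤ ∫ ω in F n, P n ω ∂μ :=
            setIntegral_nonneg (hFmeas n) (fun ω _ => hP0 n ω)
          linarith
  -- inclusion into the union of first-crossing events
  have hincl : {ω | ∃ k ∈ Finset.Icc 1 n, a ≤ ∏ i ∈ Finset.range k, W i ω}
      ⊆ ⋃ k ∈ Finset.Icc 1 n, E k := by
    intro ω hω
    rcases hω with ⟨k, hk, hak⟩
    set s : Finset ℕ := (Finset.Icc 1 n).filter (fun j => a ≤ P j ω) with hs
    have hsne : s.Nonempty := ⟨k, Finset.mem_filter.2 ⟨hk, hak⟩⟩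
    set k0 := s.min' hsne with hk0
    have hk0s : k0 ∈ s := s.min'_mem hsne
    have hk0Icc : k0 ∈ Finset.Icc 1 n := (Finset.mem_filter.1 hk0s).1
    refine Set.mem_biUnion hk0Icc ?_
    constructor
    · exact (Finset.mem_filter.1 hk0s).2
    · intro j hj
      rcases Finset.mem_Icc.1 hj with ⟨hj1, hj2⟩
      have hjlt : j < k0 := by
        have h1 : 1 ≤ k0 := (Finset.mem_Icc.1 hk0Icc).1
        omega
      by_contra hcon
      push_neg at hcon
      have hjIcc : j ∈ Finset.Icc 1 n := by
        rcases Finset.mem_Icc.1 hk0Icc with ⟨_, hk0n⟩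
        exact Finset.mem_Icc.2 ⟨hj1, by omega⟩
      have : j ∈ s := Finset.mem_filter.2 ⟨hjIcc, hcon⟩
      exact absurd (s.min'_le j this) (not_le.2 hjlt)
  calc (μ {ω | ∃ k ∈ Finset.Icc 1 n, a ≤ ∏ i ∈ Finset.range k, W i ω}).toReal
      ≤ (∑ k ∈ Finset.Icc 1 n, μ (E k)).toReal := by
        apply ENNReal.toReal_mono
        · exact ENNReal.sum_ne_top.2 (fun k _ => measure_ne_top μ _)
        · exact le_trans (measure_mono hincl) (measure_biUnion_finset_le _ _)
    _ = ∑ k ∈ Finset.Icc 1 n, (μ (E k)).toReal :=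
        ENNReal.toReal_sum (fun k _ => measure_ne_top μ _)
    _ ≤ a⁻¹ := hsumle

lemma exponent_ineq {b x y L : ℝ} (hb : 0 < b) (hx : 0 < x) (hy : 0 < y) (hL0 : 0 ≤ L)
    (hpade : (x*y/b + (x*y/b)^2/2)/(1 + x*y/b + (x*y/b)^2/6) ≤ L) :
    -(L/y)*x + ((x*y/b - L)/y^2) * b ≤ -(x^2)/(2*(x*y+b)) * (1 + 2/3*L) := by
  set P := x*y with hP
  have hPpos : 0 < P := mul_pos hx hy
  have hD : 0 < b^2 + P*b + P^2/6 := by positivity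
  have h1 : P*b + P^2/2 ≤ L * (b^2 + P*b + P^2/6) := by
    rw [div_le_iff₀ (by positivity)] at hpade
    calc P*b + P^2/2 = (P/b + (P/b)^2/2) * b^2 := by field_simp
      _ ≤ (L * (1 + P/b + (P/b)^2/6)) * b^2 :=
          mul_le_mul_of_nonneg_right hpade (sq_nonneg b)
      _ = L * (b^2 + P*b + P^2/6) := by field_simp
  have h3 : 2*P^2*(b^2 + P*b + P^2/6) ≤ (P*b+P^2/2)*(2*P*b+P^2) := by
    nlinarith [sq_nonneg P, sq_nonneg (P^2), mul_pos hPpos hb]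
  have h2 : 2*P^2*(b^2 + P*b + P^2/6) ≤ (L*(2*P*b+P^2))*(b^2 + P*b + P^2/6) := by
    calc 2*P^2*(b^2+P*b+P^2/6) ≤ (P*b+P^2/2)*(2*P*b+P^2) := h3
      _ ≤ (L*(b^2+P*b+P^2/6))*(2*P*b+P^2) := mul_le_mul_of_nonneg_right h1 (by positivity)
      _ = (L*(2*P*b+P^2))*(b^2+P*b+P^2/6) := by ring
  have h4 : 2*P^2 ≤ L*(2*P*b+P^2) := le_of_mul_le_mul_right h2 hD
  rw [← sub_nonneg]
  have expand : -(x^2)/(2*(x*y+b)) * (1 + 2/3*L) - (-(L/y)*x + ((x*y/b - L)/y^2) * b)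
      = (L*(2*(P+b)^2 - 2/3*P^2) - (2*P*(P+b)+P^2)) / (2*(P+b)*y^2) := by
    rw [hP]
    field_simp
    ring
  rw [expand]
  apply div_nonneg _ (by positivity)
  nlinarith [h1, h4]

theorem exponential_inequality_max_partial_sums
    {Ω : Type*} [MeasurableSpace Ω] (μ : Measure Ω) [IsProbabilityMeasure μ]
    (n : ℕ) (X : ℕ → Ω → ℝ)
    (hmeas : ∀ i, Measurable (X i))
    (hindep : iIndepFun X μ)
    (hmean : ∀ i, i < n → ∫ ω, X i ω ∂μ = 0)
    (hsq : ∀ i, i < n → Integrable (fun ω => X i ω ^ 2) μ)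
    (x y : ℝ) (hx : 0 < x) (hy : 0 < y) :
    (μ {ω | ∃ k ∈ Finset.Icc 1 n, x ≤ ∑ i ∈ Finset.range k, X i ω}).toReal ≤
      (μ {ω | ∃ i ∈ Finset.range n, y < X i ω}).toReal +
      Real.exp (-(x ^ 2) /
          (2 * (x * y + ∑ i ∈ Finset.range n, ∫ ω, (min (X i ω) y) ^ 2 ∂μ)) *
        (1 + 2 / 3 * Real.log
          (1 + x * y / ∑ i ∈ Finset.range n, ∫ ω, (min (X i ω) y) ^ 2 ∂μ))) := by
  classical
  set Xt : ℕ → Ω → ℝ := fun i ω => min (X i ω) y with hXt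
  set σ2 : ℕ → ℝ := fun i => ∫ ω, (Xt i ω) ^ 2 ∂μ with hσ2
  have hgoalB : ∀ i, (∫ ω, (min (X i ω) y) ^ 2 ∂μ) = σ2 i := fun i => rfl
  set B2 : ℝ := ∑ i ∈ Finset.range n, σ2 i with hB2def
  have hXtmeas : ∀ i, Measurable (Xt i) := fun i => (hmeas i).min measurable_const
  have hXty : ∀ i ω, Xt i ω ≤ y := fun i ω => min_le_right _ _
  have hXtleX : ∀ i ω, Xt i ω ≤ X i ω := fun i ω => min_le_left _ _
  have hXint : ∀ i, i < n → Integrable (X i) μ := by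
    intro i hi
    apply Integrable.mono' (((hsq i hi).add (integrable_const 1)).div_const 2)
      (hmeas i).aestronglyMeasurable
    filter_upwards with ω
    rw [Real.norm_eq_abs]
    simp only [Pi.add_apply]
    nlinarith [sq_abs (X i ω), sq_nonneg (|X i ω| - 1)]
  have hXtint : ∀ i, i < n → Integrable (Xt i) μ := by
    intro i hi
    apply Integrable.mono' ((hXint i hi).abs.add (integrable_const y))
      (hXtmeas i).aestronglyMeasurable
    filter_upwards with ω
    rw [Real.norm_eq_abs]
    simp only [Pi.add_apply, Pi.abs_apply]
    rcases le_total (X i ω) y with h' | h'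
    · rw [show Xt i ω = X i ω from min_eq_left h']
      linarith [hy.le, le_abs_self (X i ω), abs_nonneg (X i ω)]
    · rw [show Xt i ω = y from min_eq_right h', abs_of_pos hy]
      linarith [abs_nonneg (X i ω)]
  have hXt2int : ∀ i, i < n → Integrable (fun ω => Xt i ω ^ 2) μ := by
    intro i hi
    apply Integrable.mono' ((hsq i hi).add (integrable_const (y ^ 2)))
      (((hXtmeas i).pow_const 2).aestronglyMeasurable)
    filter_upwards with ω
    rw [Real.norm_eq_abs, abs_of_nonneg (sq_nonneg _)]
    simp only [Pi.add_apply]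
    rcases le_total (X i ω) y with h' | h'
    · rw [show Xt i ω = X i ω from min_eq_left h']
      nlinarith [sq_nonneg (y : ℝ)]
    · rw [show Xt i ω = y from min_eq_right h']
      nlinarith [sq_nonneg (X i ω)]
  have hXtmean : ∀ i, i < n → (∫ ω, Xt i ω ∂μ) ≤ 0 := by
    intro i hi
    rw [← hmean i hi]
    exact integral_mono (hXtint i hi) (hXint i hi) (fun ω => hXtleX i ω)
  have hσ2nonneg : ∀ i, 0 ≤ σ2 i := fun i => integral_nonneg (fun ω => sq_nonneg _)
  have hB2nonneg : 0 ≤ B2 := Finset.sum_nonneg (fun i _ => hσ2nonneg i)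
  rcases eq_or_lt_of_le hB2nonneg with hB2zero | hB2pos
  · -- degenerate case: all truncated variables vanish a.e.
    have hzero : ∀ i ∈ Finset.range n, σ2 i = 0 :=
      (Finset.sum_eq_zero_iff_of_nonneg (fun i _ => hσ2nonneg i)).1 hB2zero.symm
    have hae : ∀ᵐ ω ∂μ, ∀ i, i < n → X i ω = 0 := by
      rw [MeasureTheory.ae_all_iff]
      intro i
      by_cases hi' : i < n
      · have h0 : (∫ ω, (Xt i ω) ^ 2 ∂μ) = 0 := hzero i (Finset.mem_range.2 hi')
        have := (integral_eq_zero_iff_of_nonneg (fun ω => sq_nonneg (Xt i ω))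
          (hXt2int i hi')).1 h0
        filter_upwards [this] with ω hω
        intro _
        have hXt0 : Xt i ω = 0 := by
          have := pow_eq_zero_iff (n := 2) (by norm_num) |>.1 hω
          exact this
        rcases le_total (X i ω) y with h' | h'
        · rw [show Xt i ω = X i ω from min_eq_left h'] at hXt0; exact hXt0
        · exfalso
          rw [show Xt i ω = y from min_eq_right h'] at hXt0
          exact absurd hXt0 (ne_of_gt hy)
      · filter_upwards with ω
        intro h
        exact absurd h hi'
    have hnull : μ {ω | ∃ k ∈ Finset.Icc 1 n, x ≤ ∑ i ∈ Finset.range k, X i ω} = 0 := by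
      apply measure_mono_null _ (ae_iff.1 hae)
      intro ω hω
      simp only [Set.mem_setOf_eq] at hω ⊢
      rcases hω with ⟨k, hk, hxk⟩
      intro hall
      have : (∑ i ∈ Finset.range k, X i ω) = 0 := by
        apply Finset.sum_eq_zero
        intro i hi
        apply hall
        have := Finset.mem_Icc.1 hk
        exact lt_of_lt_of_le (Finset.mem_range.1 hi) this.2
      linarith
    rw [hnull]
    simp only [ENNReal.toReal_zero]
    exact add_nonneg ENNReal.toReal_nonneg (Real.exp_pos _).le
  · -- main case
    set t : ℝ := x * y / B2 with ht
    have htpos : 0 < t := div_pos (mul_pos hx hy) hB2pos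
    set L : ℝ := Real.log (1 + t) with hL
    have hL0 : 0 < L := Real.log_pos (by linarith)
    set lam : ℝ := L / y with hlam
    have hlampos : 0 < lam := div_pos hL0 hy
    have hlamy : lam * y = L := div_mul_cancel₀ L (ne_of_gt hy)
    have hexp : Real.exp (lam * y) = 1 + t := by
      rw [hlamy, hL, Real.exp_log (by linarith)]
    set φ : ℝ := (Real.exp (lam * y) - 1 - lam * y) / y ^ 2 with hφ
    have hφ0 : 0 ≤ φ := by
      apply div_nonneg _ (sq_nonneg y)
      nlinarith [Real.add_one_le_exp (lam * y)]
    set W : ℕ → Ω → ℝ := fun i ω => Real.exp (lam * Xt i ω - φ * σ2 i) with hW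
    have hWmeas : ∀ i, Measurable (W i) :=
      fun i => (Real.measurable_exp.comp (((hXtmeas i).const_mul lam).sub measurable_const))
    have hW0 : ∀ i ω, 0 ≤ W i ω := fun i ω => (Real.exp_pos _).le
    have hWC : ∀ i ω, W i ω ≤ Real.exp (lam * y) := by
      intro i ω
      apply Real.exp_le_exp.2
      have h1 : lam * Xt i ω ≤ lam * y := mul_le_mul_of_nonneg_left (hXty i ω) hlampos.le
      nlinarith [mul_nonneg hφ0 (hσ2nonneg i)]
    have hWindep : iIndepFun W μ := by
      have := hindep.comp (fun i v => Real.exp (lam * min v y - φ * σ2 i))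
        (fun i => Real.measurable_exp.comp
          (((measurable_id.min measurable_const).const_mul lam).sub measurable_const))
      exact this
    have hyne : y ≠ 0 := ne_of_gt hy
    have hlamne : lam ≠ 0 := ne_of_gt hlampos
    have hWint : ∀ i, i < n → (∫ ω, W i ω ∂μ) ≤ 1 := by
      intro i hi
      have hexpint : Integrable (fun ω => Real.exp (lam * Xt i ω)) μ := by
        apply Integrable.mono' (integrable_const (Real.exp (lam * y)))
          (((hXtmeas i).const_mul lam).exp.aestronglyMeasurable)
        filter_upwards with ω
        rw [Real.norm_eq_abs, abs_of_nonneg (Real.exp_pos _).le]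
        exact Real.exp_le_exp.2 (mul_le_mul_of_nonneg_left (hXty i ω) hlampos.le)
      have hXtl := hXtint i hi
      have hXt2 := hXt2int i hi
      have hptwise : ∀ ω, Real.exp (lam * Xt i ω)
          ≤ 1 + lam * Xt i ω + φ * Xt i ω ^ 2 := by
        intro ω
        have hc : 0 < lam * y := mul_pos hlampos hy
        have hs : lam * Xt i ω ≤ lam * y := mul_le_mul_of_nonneg_left (hXty i ω) hlampos.le
        have hq := exp_le_quad hc hs
        have heq : (Real.exp (lam * y) - 1 - lam * y) / (lam * y) ^ 2 * (lam * Xt i ω) ^ 2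
            = φ * Xt i ω ^ 2 := by
          rw [hφ]
          field_simp
        linarith [hq, heq.le, heq.ge]
      have ha1 : Integrable (fun ω => 1 + lam * Xt i ω) μ :=
        (integrable_const 1).add (hXtl.const_mul lam)
      have ha2 : Integrable (fun ω => φ * Xt i ω ^ 2) μ := hXt2.const_mul φ
      have hrhsint : Integrable (fun ω => 1 + lam * Xt i ω + φ * Xt i ω ^ 2) μ := ha1.add ha2
      have hint1 : (∫ ω, Real.exp (lam * Xt i ω) ∂μ)
          ≤ 1 + lam * (∫ ω, Xt i ω ∂μ) + φ * σ2 i := by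
        calc (∫ ω, Real.exp (lam * Xt i ω) ∂μ)
            ≤ ∫ ω, (1 + lam * Xt i ω + φ * Xt i ω ^ 2) ∂μ :=
              integral_mono hexpint hrhsint hptwise
          _ = 1 + lam * (∫ ω, Xt i ω ∂μ) + φ * σ2 i := by
              rw [integral_add ha1 ha2, integral_add (integrable_const 1) (hXtl.const_mul lam),
                integral_const, integral_const_mul, integral_const_mul]
              simp [hσ2]
      have hmean' : lam * (∫ ω, Xt i ω ∂μ) ≤ 0 :=
        mul_nonpos_of_nonneg_of_nonpos hlampos.le (hXtmean i hi)
      have hint2 : (∫ ω, Real.exp (lam * Xt i ω) ∂μ) ≤ Real.exp (φ * σ2 i) := by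
        have := Real.add_one_le_exp (φ * σ2 i)
        linarith
      have hWeq : (∫ ω, W i ω ∂μ)
          = Real.exp (-(φ * σ2 i)) * ∫ ω, Real.exp (lam * Xt i ω) ∂μ := by
        rw [← integral_const_mul]
        congr 1
        funext ω
        rw [hW]
        simp only
        rw [← Real.exp_add]
        ring_nf
      rw [hWeq]
      calc Real.exp (-(φ * σ2 i)) * ∫ ω, Real.exp (lam * Xt i ω) ∂μ
          ≤ Real.exp (-(φ * σ2 i)) * Real.exp (φ * σ2 i) :=
            mul_le_mul_of_nonneg_left hint2 (Real.exp_pos _).le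
        _ = 1 := by rw [← Real.exp_add]; simp
    set a : ℝ := Real.exp (lam * x - φ * B2) with ha
    have hapos : 0 < a := Real.exp_pos _
    have hmax := prod_maximal μ n W hWmeas hWindep (Real.exp (lam * y)) hW0 hWC hWint a hapos
    -- inclusion
    have hincl : {ω | ∃ k ∈ Finset.Icc 1 n, x ≤ ∑ i ∈ Finset.range k, X i ω}
        ⊆ {ω | ∃ i ∈ Finset.range n, y < X i ω}
          ∪ {ω | ∃ k ∈ Finset.Icc 1 n, a ≤ ∏ i ∈ Finset.range k, W i ω} := by
      intro ω hω
      rcases hω with ⟨k, hk, hxk⟩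
      by_cases hbig : ∃ i ∈ Finset.range n, y < X i ω
      · exact Or.inl hbig
      · push_neg at hbig
        refine Or.inr ⟨k, hk, ?_⟩
        rcases Finset.mem_Icc.1 hk with ⟨hk1, hk2⟩
        have hsum : (∑ i ∈ Finset.range k, Xt i ω) = ∑ i ∈ Finset.range k, X i ω := by
          apply Finset.sum_congr rfl
          intro i hi
          have hin : i < n := lt_of_lt_of_le (Finset.mem_range.1 hi) hk2
          exact min_eq_left (hbig i (Finset.mem_range.2 hin))
        have hprodW : (∏ i ∈ Finset.range k, W i ω)
            = Real.exp (lam * (∑ i ∈ Finset.range k, Xt i ω)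
                - φ * ∑ i ∈ Finset.range k, σ2 i) := by
          rw [← Real.exp_sum]
          congr 1
          rw [Finset.sum_sub_distrib, ← Finset.mul_sum, ← Finset.mul_sum]
        rw [hprodW, ha]
        apply Real.exp_le_exp.2
        have h1 : lam * x ≤ lam * ∑ i ∈ Finset.range k, Xt i ω := by
          rw [hsum]
          exact mul_le_mul_of_nonneg_left hxk hlampos.le
        have h2 : (∑ i ∈ Finset.range k, σ2 i) ≤ B2 := by
          rw [hB2def]
          exact Finset.sum_le_sum_of_subset_of_nonneg (Finset.range_subset_range.2 hk2)
            (fun i _ _ => hσ2nonneg i)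
        have h3 := mul_le_mul_of_nonneg_left h2 hφ0
        linarith
    -- measure arithmetic
    have harith : (μ {ω | ∃ k ∈ Finset.Icc 1 n, x ≤ ∑ i ∈ Finset.range k, X i ω}).toReal
        ≤ (μ {ω | ∃ i ∈ Finset.range n, y < X i ω}).toReal
          + (μ {ω | ∃ k ∈ Finset.Icc 1 n, a ≤ ∏ i ∈ Finset.range k, W i ω}).toReal := by
      have h2 : μ ({ω | ∃ i ∈ Finset.range n, y < X i ω}
            ∪ {ω | ∃ k ∈ Finset.Icc 1 n, a ≤ ∏ i ∈ Finset.range k, W i ω})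
          ≤ μ {ω | ∃ i ∈ Finset.range n, y < X i ω}
            + μ {ω | ∃ k ∈ Finset.Icc 1 n, a ≤ ∏ i ∈ Finset.range k, W i ω} :=
        measure_union_le _ _
      calc (μ {ω | ∃ k ∈ Finset.Icc 1 n, x ≤ ∑ i ∈ Finset.range k, X i ω}).toReal
          ≤ (μ {ω | ∃ i ∈ Finset.range n, y < X i ω}
            + μ {ω | ∃ k ∈ Finset.Icc 1 n, a ≤ ∏ i ∈ Finset.range k, W i ω}).toReal := by
            apply ENNReal.toReal_mono
            · exact ENNReal.add_ne_top.2 ⟨measure_ne_top μ _, measure_ne_top μ _⟩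
            · exact le_trans (measure_mono hincl) h2
        _ = _ := ENNReal.toReal_add (measure_ne_top μ _) (measure_ne_top μ _)
    -- final exponent comparison
    have hfinal : a⁻¹ ≤ Real.exp (-(x ^ 2) / (2 * (x * y + B2)) * (1 + 2 / 3 * L)) := by
      rw [ha, ← Real.exp_neg]
      apply Real.exp_le_exp.2
      have hφval : φ = (t - L) / y ^ 2 := by rw [hφ, hexp, hlamy]; ring_nf
      have hpade := log_ge_pade htpos.le
      have := exponent_ineq (b := B2) (x := x) (y := y) (L := L) hB2pos hx hy hL0.le
        (by rw [← ht, hL]; exact hpade)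
      calc -(lam * x - φ * B2) = -(L/y)*x + ((x*y/B2 - L)/y^2) * B2 := by
            rw [hφval, hlam, ht]; ring
        _ ≤ -(x^2)/(2*(x*y+B2)) * (1 + 2/3*L) := this
        _ = -(x ^ 2) / (2 * (x * y + B2)) * (1 + 2 / 3 * L) := by ring
    calc (μ {ω | ∃ k ∈ Finset.Icc 1 n, x ≤ ∑ i ∈ Finset.range k, X i ω}).toReal
        ≤ (μ {ω | ∃ i ∈ Finset.range n, y < X i ω}).toReal
          + (μ {ω | ∃ k ∈ Finset.Icc 1 n, a ≤ ∏ i ∈ Finset.range k, W i ω}).toReal := harith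
      _ ≤ (μ {ω | ∃ i ∈ Finset.range n, y < X i ω}).toReal
          + Real.exp (-(x ^ 2) / (2 * (x * y + B2)) * (1 + 2 / 3 * L)) := by
          exact add_le_add (le_refl _) (le_trans hmax hfinal)
      _ = _ := by rw [hL, ht]
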